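/- Let d ≥ 2 and for v ∈ ℝ^{d−1} let u(v) ∈ SL(d,ℝ) be the matrix whose diagonal entries equal 1, whose entries in the last column above the diagonal are u(v)_{i,d} = v_i for 1 ≤ i ≤ d−1, and whose remaining entries are 0 (these matrices form the unipotent radical of the stabilizer in SL(d,ℝ) of the hyperplane spanned by e₁,…,e_{d−1}). Then for every sequence (v_n) in ℝ^{d−1} with ‖v_n‖ → ∞, the sequence g_n = u(v_n) is P-regular for P the stabilizer of a line in ℝ^d: ‖g_n‖ → ∞, and every matrix L that arises as the limit of a convergent subsequence of (g_n/‖g_n‖) has rank 1. In particular, every sequence of pairwise distinct elements of a lattice in this unipotent radical is P-regular. -/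

import Mathlib

open Filter

/-- Euclidean norm of a vector in ℝⁿ. -/
noncomputable def euclNorm {n : ℕ} (v : Fin n → ℝ) : ℝ :=
  Real.sqrt (∑ i, (v i) ^ 2)

/-- Frobenius (entrywise ℓ²) norm of a d×d real matrix. -/
noncomputable def frobNormD {d : ℕ} (g : Matrix (Fin d) (Fin d) ℝ) : ℝ :=
  Real.sqrt (∑ i, ∑ j, (g i j) ^ 2)

/-- The unipotent matrix with 1's on the diagonal and the vector `v` filling the
entries of the last column above the diagonal; these matrices form the unipotent
radical of the stabilizer in SL(d,ℝ) of the hyperplane spanned by e₁, …, e_{d-1}. -/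
def lastColUnip (d : ℕ) (v : Fin (d - 1) → ℝ) : Matrix (Fin d) (Fin d) ℝ :=
  fun i j => if i = j then 1
    else if h : (j : ℕ) = d - 1 ∧ (i : ℕ) < d - 1 then v ⟨i, h.2⟩ else 0

/-- A sequence of matrices is P-regular (P the stabilizer of a line in ℝ^d) iff
its norms tend to infinity and every limit of a convergent subsequence of the
normalized sequence has rank 1. -/
def IsPRegularSeq {d : ℕ} (g : ℕ → Matrix (Fin d) (Fin d) ℝ) : Prop :=
  Tendsto (fun n => frobNormD (g n)) atTop atTop ∧
  ∀ L : Matrix (Fin d) (Fin d) ℝ,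
    (∃ φ : ℕ → ℕ, StrictMono φ ∧
      Tendsto (fun k => (frobNormD (g (φ k)))⁻¹ • g (φ k)) atTop (nhds L)) →
    L.rank = 1

open Matrix

lemma sumSq (m : ℕ) (v : Fin m → ℝ) :
    ∑ i, ∑ j, (lastColUnip (m+1) v i j)^2 = (m+1 : ℝ) + ∑ i, (v i)^2 := by
  have hrow : ∀ i : Fin (m+1), ∑ j, (lastColUnip (m+1) v i j)^2
      = 1 + (if h : (i:ℕ) < m then (v ⟨i, h⟩)^2 else 0) := by
    intro i
    by_cases hi : (i:ℕ) < m
    · have hne : i ≠ Fin.last m := by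
        intro h; rw [h] at hi; simp at hi
      rw [dif_pos hi]
      rw [← Finset.sum_subset (Finset.subset_univ {i, Fin.last m})]
      · rw [Finset.sum_pair hne]
        have h1 : lastColUnip (m+1) v i i = 1 := by simp [lastColUnip]
        have h2 : lastColUnip (m+1) v i (Fin.last m) = v ⟨i, hi⟩ := by
          simp [lastColUnip, hne, hi]
        rw [h1, h2]; ring
      · intro j _ hj
        simp only [Finset.mem_insert, Finset.mem_singleton, not_or] at hj
        have hij : i ≠ j := fun h => hj.1 h.symm
        have hjv : (j:ℕ) ≠ m := by
          intro h; exact hj.2 (Fin.ext (by simpa using h))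
        simp [lastColUnip, hij, hjv]
    · rw [dif_neg hi]
      rw [Finset.sum_eq_single i]
      · simp [lastColUnip]
      · intro j _ hj
        have hij : i ≠ j := fun h => hj h.symm
        simp [lastColUnip, hij, hi]
      · intro h; simp at h
  simp only [hrow, Finset.sum_add_distrib, Finset.sum_const, Finset.card_univ,
    Fintype.card_fin, nsmul_eq_mul, mul_one]
  congr 1
  · push_cast; ring
  · rw [Fin.sum_univ_castSucc]
    simp [Fin.castSucc]

lemma frob_eq (m : ℕ) (v : Fin m → ℝ) :
    frobNormD (lastColUnip (m+1) v) = Real.sqrt ((m+1 : ℝ) + ∑ i, (v i)^2) := by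
  rw [frobNormD, sumSq]

lemma eucl_le_frob (m : ℕ) (v : Fin m → ℝ) :
    euclNorm v ≤ frobNormD (lastColUnip (m+1) v) := by
  rw [frob_eq, euclNorm]
  apply Real.sqrt_le_sqrt
  have : (0:ℝ) ≤ m + 1 := by positivity
  linarith

lemma one_le_frob (m : ℕ) (v : Fin m → ℝ) :
    (1:ℝ) ≤ frobNormD (lastColUnip (m+1) v) := by
  rw [frob_eq]
  have h0 : (0:ℝ) ≤ ∑ i, (v i)^2 := by positivity
  have h1 : (1:ℝ) ≤ (m+1 : ℝ) + ∑ i, (v i)^2 := by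
    have : (0:ℝ) ≤ (m:ℝ) := Nat.cast_nonneg m
    linarith
  calc (1:ℝ) = Real.sqrt 1 := Real.sqrt_one.symm
  _ ≤ _ := Real.sqrt_le_sqrt h1

lemma part1 (m : ℕ) (v : ℕ → Fin m → ℝ)
    (hv : Tendsto (fun n => euclNorm (v n)) atTop atTop) :
    IsPRegularSeq fun n => lastColUnip (m+1) (v n) := by
  constructor
  · exact tendsto_atTop_mono (fun n => eucl_le_frob m (v n)) hv
  · rintro L ⟨φ, hφ, hL⟩
    set g : ℕ → Matrix (Fin (m+1)) (Fin (m+1)) ℝ := fun n => lastColUnip (m+1) (v n) with hg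
    set N : ℕ → ℝ := fun k => frobNormD (g (φ k)) with hNdef
    have hNpos : ∀ k, 0 < N k := fun k => lt_of_lt_of_le one_pos (one_le_frob m (v (φ k)))
    have hNtop : Tendsto N atTop atTop :=
      (tendsto_atTop_mono (fun n => eucl_le_frob m (v n)) hv).comp hφ.tendsto_atTop
    have hNinv : Tendsto (fun k => (N k)⁻¹) atTop (nhds 0) :=
      tendsto_inv_atTop_zero.comp hNtop
    have hentry : ∀ i j, Tendsto (fun k => (N k)⁻¹ * g (φ k) i j) atTop (nhds (L i j)) := by
      intro i j
      have hc : Continuous (fun M : Matrix (Fin (m+1)) (Fin (m+1)) ℝ => M i j) :=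
        (continuous_apply j).comp (continuous_apply i)
      exact (hc.tendsto L).comp hL
    have hzero : ∀ i j : Fin (m+1), (j ≠ Fin.last m ∨ i = Fin.last m) → L i j = 0 := by
      intro i j hij
      have hval : ∀ k, g (φ k) i j = if i = j then 1 else 0 := by
        intro k
        rcases hij with hj | hi
        · have hjv : (j:ℕ) ≠ m := fun h => hj (Fin.ext (by simpa using h))
          simp [hg, lastColUnip, hjv]
        · by_cases hij' : i = j
          · simp [hg, lastColUnip, hij']
          · have : ¬ (i:ℕ) < m := by rw [hi]; simp
            simp [hg, lastColUnip, hij', this]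
      have h1 : Tendsto (fun k => (N k)⁻¹ * g (φ k) i j) atTop (nhds 0) := by
        have : Tendsto (fun k => (N k)⁻¹ * (if i = j then (1:ℝ) else 0)) atTop (nhds 0) := by
          simpa using hNinv.mul_const (if i = j then (1:ℝ) else 0)
        refine this.congr fun k => by rw [hval k]
      exact tendsto_nhds_unique (hentry i j) h1
    have hsum : ∑ i, ∑ j, (L i j)^2 = 1 := by
      have hk : ∀ k, ∑ i, ∑ j, ((N k)⁻¹ * g (φ k) i j)^2 = 1 := by
        intro k
        have hS : ∑ i, ∑ j, (g (φ k) i j)^2 = (m+1 : ℝ) + ∑ i, (v (φ k) i)^2 := sumSq m _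
        have hN2 : (N k)^2 = (m+1 : ℝ) + ∑ i, (v (φ k) i)^2 := by
          rw [hNdef]
          simp only [hg, frob_eq]
          rw [Real.sq_sqrt]
          positivity
        simp only [mul_pow, ← Finset.mul_sum]
        rw [hS, ← hN2, inv_pow, inv_mul_cancel₀ (pow_ne_zero 2 (hNpos k).ne')]
      have h2 : Tendsto (fun k => ∑ i, ∑ j, ((N k)⁻¹ * g (φ k) i j)^2) atTop
          (nhds (∑ i, ∑ j, (L i j)^2)) :=
        tendsto_finset_sum _ fun i _ => tendsto_finset_sum _ fun j _ => (hentry i j).pow 2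
      have h3 : Tendsto (fun k => ∑ i, ∑ j, ((N k)⁻¹ * g (φ k) i j)^2) atTop (nhds 1) := by
        simp only [hk]; exact (tendsto_const_nhds : Tendsto (fun _ : ℕ => (1:ℝ)) atTop (nhds 1))
      exact tendsto_nhds_unique h2 h3
    set c : Fin (m+1) → ℝ := fun i => L i (Fin.last m) with hcdef
    have hc : c ≠ 0 := by
      intro h
      have h0 : ∑ i, ∑ j, (L i j)^2 = 0 := by
        apply Finset.sum_eq_zero; intro i _
        apply Finset.sum_eq_zero; intro j _
        by_cases hj : j = Fin.last m
        · subst hj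
          have : c i = 0 := by rw [h]; rfl
          rw [hcdef] at this; simp at this; simp [this]
        · simp [hzero i j (Or.inl hj)]
      rw [hsum] at h0; norm_num at h0
    rw [Matrix.rank_eq_finrank_span_cols]
    have hcol : Lᵀ (Fin.last m) = c := rfl
    have hspan : Submodule.span ℝ (Set.range Lᵀ) = Submodule.span ℝ {c} := by
      apply le_antisymm
      · rw [Submodule.span_le]
        rintro _ ⟨j, rfl⟩
        by_cases hj : j = Fin.last m
        · subst hj; rw [hcol]; exact Submodule.subset_span rfl
        · have : Lᵀ j = 0 := funext fun i => hzero i j (Or.inl hj)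
          rw [this]; exact (Submodule.span ℝ {c}).zero_mem
      · rw [Submodule.span_le, Set.singleton_subset_iff]
        exact Submodule.subset_span ⟨Fin.last m, hcol⟩
    rw [show L.col = Lᵀ from rfl, hspan]
    exact finrank_span_singleton hc

lemma norm_le_eucl (m : ℕ) (v : Fin m → ℝ) : ‖v‖ ≤ euclNorm v := by
  simp only [euclNorm]
  rw [pi_norm_le_iff_of_nonneg (Real.sqrt_nonneg _)]
  intro i
  rw [Real.norm_eq_abs, ← Real.sqrt_sq_eq_abs]
  exact Real.sqrt_le_sqrt (Finset.single_le_sum (fun i _ => sq_nonneg (v i)) (Finset.mem_univ i))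

lemma part2 (m : ℕ) (Λ : Submodule ℤ (Fin m → ℝ)) [DiscreteTopology Λ]
    (γ : ℕ → Λ) (hγ : Function.Injective γ) :
    Tendsto (fun n => euclNorm ((γ n : Fin m → ℝ))) atTop atTop := by
  have hnorm : Tendsto (fun n => ‖(γ n : Fin m → ℝ)‖) atTop atTop := by
    rw [tendsto_atTop_atTop]
    intro b
    by_contra hb
    push_neg at hb
    have hfreq : {n : ℕ | ‖(γ n : Fin m → ℝ)‖ < b}.Infinite := by
      rw [← Nat.frequently_atTop_iff_infinite, frequently_atTop]
      intro N; obtain ⟨n, hn, h⟩ := hb N; exact ⟨n, hn, h⟩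
    haveI : DiscreteTopology Λ.toAddSubgroup := ‹DiscreteTopology Λ›
    have hclosed : IsClosed (Λ : Set (Fin m → ℝ)) :=
      AddSubgroup.isClosed_of_discrete (H := Λ.toAddSubgroup)
    haveI : DiscreteTopology ↥(Λ : Set (Fin m → ℝ)) := ‹DiscreteTopology Λ›
    have hfin : (Metric.closedBall (0 : Fin m → ℝ) b ∩ (Λ : Set (Fin m → ℝ))).Finite :=
      Metric.finite_isBounded_inter_isClosed DiscreteTopology.isDiscrete Metric.isBounded_closedBall hclosed
    set f : ℕ → (Fin m → ℝ) := fun n => (γ n : Fin m → ℝ) with hf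
    have hfinj : Function.Injective f := Subtype.coe_injective.comp hγ
    have hsub : {n : ℕ | ‖(γ n : Fin m → ℝ)‖ < b} ⊆
        f ⁻¹' (Metric.closedBall (0 : Fin m → ℝ) b ∩ (Λ : Set (Fin m → ℝ))) := by
      intro n hn
      exact ⟨mem_closedBall_zero_iff.mpr (le_of_lt hn), (γ n).2⟩
    exact hfreq ((hfin.preimage hfinj.injOn).subset hsub)
  exact tendsto_atTop_mono (fun n => norm_le_eucl m _) hnorm

/-- Claim 3: any sequence in the unipotent radical of the stabilizer of a
hyperplane whose parameter vectors go to infinity is P-regular, for P the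
stabilizer of a line.  In particular, every sequence of pairwise distinct
elements of a lattice in this unipotent radical is P-regular. -/
theorem lastColUnip_regular (d : ℕ) (hd : 2 ≤ d) :
    (∀ v : ℕ → (Fin (d - 1) → ℝ),
      Tendsto (fun n => euclNorm (v n)) atTop atTop →
      IsPRegularSeq fun n => lastColUnip d (v n)) ∧
    (∀ (Λ : Submodule ℤ (Fin (d - 1) → ℝ)) [DiscreteTopology Λ] [IsZLattice ℝ Λ],
      ∀ γ : ℕ → Λ, Function.Injective γ →
        IsPRegularSeq fun n => lastColUnip d (γ n : Fin (d - 1) → ℝ)) := by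
  obtain ⟨m, rfl⟩ : ∃ m, d = m + 1 := ⟨d - 1, by omega⟩
  refine ⟨fun v hv => part1 m v hv, ?_⟩
  intro Λ _inst _ γ hγ
  exact part1 m _ (@part2 m Λ _inst γ hγ)
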